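/- arXiv:2210.14146 — 4 statements merged into one kernel-verified Lean document; each statement's English description precedes it below -/
import Mathlib

section
/- Let T be a Grothendieck site. If a functor P : Shv(T)^op → Set preserves all small limits, then the composite P ∘ h^♯ : T^op → Set is a sheaf on T, and moreover the right Kan extension Ran_{h^♯}(P ∘ h^♯) is naturally isomorphic to P. -/
open CategoryTheory Limits Opposite

universe u

/-- `h^♯ : T ⥤ Shv(T)`: the Yoneda embedding followed by sheafification. -/
noncomputable def hSharp {C : Type u} [SmallCategory C] (J : GrothendieckTopology C) :
    C ⥤ Sheaf J (Type u) :=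
  yoneda ⋙ presheafToSheaf J (Type u)

namespace StmtAux

variable {C : Type u} [SmallCategory C] (J : GrothendieckTopology C)
variable (P : (Sheaf J (Type u))ᵒᵖ ⥤ Type u)

/-- `P` precomposed with (the opposite of) sheafification. -/
noncomputable abbrev Pp : (Cᵒᵖ ⥤ Type u)ᵒᵖ ⥤ Type u :=
  (presheafToSheaf J (Type u)).op ⋙ P

/-- The restriction of `P` along `h^♯`, as a presheaf on `C`. -/
noncomputable abbrev A0 : Cᵒᵖ ⥤ Type u := yoneda.op ⋙ Pp J P

section Preserves

variable [PreservesLimitsOfSize.{u, u} P]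

instance : PreservesLimitsOfSize.{u, u} (Pp J P) := by
  have h1 : PreservesColimitsOfSize.{u, u} (presheafToSheaf J (Type u)) :=
    (sheafificationAdjunction J (Type u)).leftAdjoint_preservesColimits
  have h2 : PreservesLimitsOfSize.{u, u} (presheafToSheaf J (Type u)).op :=
    preservesLimitsOfSize_op _
  infer_instance

end Preserves

/-- The canonical comparison from `Pp` to homming into `A0`. -/
noncomputable def phi : Pp J P ⟶ yoneda.obj (A0 J P) where
  app Qop := TypeCat.ofHom fun ξ =>
    { app := fun c => TypeCat.ofHom fun r => (Pp J P).map (yonedaEquiv.symm r).op ξ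
      naturality := fun c c' g => by
        ext r
        dsimp only [TypeCat.Fun.toFun_apply, types_comp_apply, TypeCat.ofHom_apply]
        rw [yonedaEquiv_symm_map]
        dsimp [A0]
        rw [← FunctorToTypes.map_comp_apply, ← op_comp, ← Functor.map_comp] }
  naturality Qop Q'op h := by
    ext ξ : 3
    apply NatTrans.ext
    funext c
    ext r : 3
    change (Pp J P).map (yonedaEquiv.symm r).op ((Pp J P).map h ξ)
      = (Pp J P).map (yonedaEquiv.symm (h.unop.app (op c.unop) r)).op ξ
    rw [← yonedaEquiv_symm_naturality_right, ← FunctorToTypes.map_comp_apply]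
    rfl

lemma phi_app_yoneda_eq (X : C) (ξ : (Pp J P).obj (op (yoneda.obj X))) :
    ((phi J P).app (op (yoneda.obj X))) ξ
      = (yonedaEquiv.symm (ξ : (A0 J P).obj (op X)) : yoneda.obj X ⟶ A0 J P) := by
  apply yonedaEquiv.injective
  rw [Equiv.apply_symm_apply, yonedaEquiv_apply]
  have h1 : (yonedaEquiv.symm (𝟙 X) : yoneda.obj X ⟶ yoneda.obj X) = 𝟙 _ := by
    apply yonedaEquiv.injective
    rw [Equiv.apply_symm_apply, yonedaEquiv_apply]
    rfl
  change (Pp J P).map (yonedaEquiv.symm (𝟙 X)).op ξ = ξ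
  rw [h1]
  simp

instance phi_app_yoneda_isIso (X : C) :
    IsIso ((phi J P).app (op (yoneda.obj X))) := by
  rw [isIso_iff_bijective]
  have : ((phi J P).app (op (yoneda.obj X)))
      = fun ξ => (yonedaEquiv.symm (ξ : (A0 J P).obj (op X)) : yoneda.obj X ⟶ A0 J P) := by
    funext ξ; exact phi_app_yoneda_eq J P X ξ
  rw [this]
  exact yonedaEquiv.symm.bijective

section Bij

variable [PreservesLimitsOfSize.{u, u} P]

lemma phi_app_isIso (Q : Cᵒᵖ ⥤ Type u) : IsIso ((phi J P).app (op Q)) := by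
  let tc := Presheaf.tautologicalCocone Q
  have htc : IsColimit tc := Presheaf.isColimitTautologicalCocone Q
  have hs : IsLimit ((Pp J P).mapCone tc.op) := isLimitOfPreserves _ htc.op
  have ht : IsLimit ((yoneda.obj (A0 J P)).mapCone tc.op) := isLimitOfPreserves _ htc.op
  let w : (CostructuredArrow.proj yoneda Q ⋙ yoneda).op ⋙ Pp J P ≅
      (CostructuredArrow.proj yoneda Q ⋙ yoneda).op ⋙ yoneda.obj (A0 J P) :=
    NatIso.ofComponents
      (fun j => @asIso _ _ _ _ _ (phi_app_yoneda_isIso J P j.unop.left))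
      (fun f => (phi J P).naturality _)
  have : (phi J P).app (op Q) = (IsLimit.conePointsIsoOfNatIso hs ht w).hom := by
    apply ht.hom_ext
    intro j
    erw [IsLimit.conePointsIsoOfNatIso_hom_comp]
    dsimp only [w, NatIso.ofComponents_hom_app, asIso_hom, Functor.mapCone_π_app]
    exact ((phi J P).naturality _).symm
  rw [this]
  exact (IsLimit.conePointsIsoOfNatIso hs ht w).isIso_hom

/-- Part 1: the restriction of `P` along `h^♯` is a sheaf. -/
theorem isSheaf_A0 : Presheaf.IsSheaf J (A0 J P) := by
  rw [isSheaf_iff_isSheaf_of_type]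
  intro X S hS
  rw [Presieve.isSheafFor_iff_yonedaSheafCondition]
  have hW : J.W S.functorInclusion := by
    intro Z hZ
    have hZsheaf : Presieve.IsSheafFor Z (S : Presieve X) :=
      ((isSheaf_iff_isSheaf_of_type J Z).1 hZ) S hS
    have hZ' := Presieve.isSheafFor_iff_yonedaSheafCondition.1 hZsheaf
    constructor
    · intro g₁ g₂ hg
      exact ((hZ' (S.functorInclusion ≫ g₂)).unique hg rfl)
    · intro f
      exact ⟨(hZ' f).exists.choose, (hZ' f).exists.choose_spec⟩
  have hIso : IsIso ((presheafToSheaf J (Type u)).map S.functorInclusion) := (J.W_iff _).1 hW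
  have hm : Function.Bijective ((Pp J P).map S.functorInclusion.op) := by
    rw [← isIso_iff_bijective]
    change IsIso (P.map ((presheafToSheaf J (Type u)).map S.functorInclusion).op)
    infer_instance
  have h1 : Function.Bijective ((phi J P).app (op (yoneda.obj X))) := by
    rw [← isIso_iff_bijective]; infer_instance
  have h2 : Function.Bijective ((phi J P).app (op S.functor)) := by
    rw [← isIso_iff_bijective]; exact phi_app_isIso J P S.functor
  let e1 := Equiv.ofBijective _ h1
  have key : ∀ ξ, S.functorInclusion ≫ (phi J P).app (op (yoneda.obj X)) ξ
      = (phi J P).app (op S.functor) ((Pp J P).map S.functorInclusion.op ξ) := fun ξ =>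
    (ConcreteCategory.congr_hom ((phi J P).naturality S.functorInclusion.op) ξ).symm
  have hcomp : (fun g : yoneda.obj X ⟶ A0 J P => S.functorInclusion ≫ g)
      = (fun ξ => (phi J P).app (op S.functor) ((Pp J P).map S.functorInclusion.op ξ))
        ∘ e1.symm := by
    funext g
    have h3 : (phi J P).app (op (yoneda.obj X)) (e1.symm g) = g := e1.apply_symm_apply g
    dsimp only [Function.comp]
    conv_lhs => rw [← h3]
    exact key _
  have hb : Function.Bijective
      (fun g : yoneda.obj X ⟶ A0 J P => S.functorInclusion ≫ g) := by
    rw [hcomp]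
    exact (h2.comp hm).comp e1.symm.bijective
  intro f
  obtain ⟨g, hg⟩ := hb.2 f
  exact ⟨g, hg, fun g' hg' => hb.1 (hg'.trans hg.symm)⟩

end Bij

section Part2

variable (F : Sheaf J (Type u))

/-- Comparison of comma categories induced by sheafification. -/
noncomputable def eF : CostructuredArrow yoneda ((sheafToPresheaf J (Type u)).obj F)
    ⥤ CostructuredArrow (hSharp J) F where
  obj j := CostructuredArrow.mk ((presheafToSheaf J (Type u)).map j.hom ≫
    (sheafificationAdjunction J (Type u)).counit.app F)
  map {j j'} g := CostructuredArrow.homMk g.left (by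
    rw [CostructuredArrow.mk_hom_eq_self, CostructuredArrow.mk_hom_eq_self]
    conv_rhs => erw [← CostructuredArrow.w g, Functor.map_comp, Category.assoc]
    rfl)
  map_id j := by apply CostructuredArrow.hom_ext; simp
  map_comp f g := by apply CostructuredArrow.hom_ext; simp

instance : (eF J F).Faithful where
  map_injective {j j'} f g h := by
    apply CostructuredArrow.hom_ext
    have := congrArg CommaMorphism.left h
    simpa [eF] using this

instance : (eF J F).Full where
  map_surjective {j j'} u := by
    have hw : yoneda.map u.left ≫ j'.hom = j.hom := by
      apply ((sheafificationAdjunction J (Type u)).homEquiv _ F).symm.injective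
      erw [Adjunction.homEquiv_counit, Adjunction.homEquiv_counit]
      have hu := CostructuredArrow.w u
      simp only [eF, CostructuredArrow.comp_left, CostructuredArrow.mk_hom_eq_self] at hu
      erw [Functor.map_comp, Category.assoc]
      simp [hSharp] at hu
      exact hu
    refine ⟨CostructuredArrow.homMk u.left hw, ?_⟩
    apply CostructuredArrow.hom_ext
    simp [eF]
    rfl

instance : (eF J F).EssSurj where
  mem_essImage k := ⟨CostructuredArrow.mk
      ((sheafificationAdjunction J (Type u)).homEquiv _ F k.hom),
    ⟨CostructuredArrow.isoMk (Iso.refl _) (by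
      simp only [eF, CostructuredArrow.mk_hom_eq_self]
      erw [← Adjunction.homEquiv_counit, Equiv.symm_apply_apply]
      simp [hSharp])⟩⟩

instance : (eF J F).IsEquivalence := {}

/-- The tautological cocone of a sheaf over `h^♯`. -/
@[simps]
noncomputable def kappa : Cocone (CostructuredArrow.proj (hSharp J) F ⋙ hSharp J) where
  pt := F
  ι :=
    { app := fun j => j.hom
      naturality := fun j j' g => by
        dsimp
        erw [Category.comp_id]; exact CostructuredArrow.w g }

noncomputable def isColimitKappa : IsColimit (kappa J F) := by
  apply IsColimit.ofWhiskerEquivalence (eF J F).asEquivalence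
  have htc : IsColimit (Presheaf.tautologicalCocone ((sheafToPresheaf J (Type u)).obj F)) :=
    Presheaf.isColimitTautologicalCocone _
  have h1 : IsColimit ((presheafToSheaf J (Type u)).mapCocone
      (Presheaf.tautologicalCocone ((sheafToPresheaf J (Type u)).obj F))) :=
    isColimitOfPreserves _ htc
  refine IsColimit.ofIsoColimit h1
    (Cocones.ext (@asIso _ _ _ _ ((sheafificationAdjunction J (Type u)).counit.app F)
      (isIso_sheafificationAdjunction_counit F)) ?_)
  intro j
  simp [eF]
  rfl

/-- The canonical cone exhibiting codensity of `h^♯`. -/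
@[simps]
noncomputable def coneK : Cone (StructuredArrow.proj (op F) (hSharp J).op ⋙ (hSharp J).op) where
  pt := op F
  π :=
    { app := fun j => j.hom
      naturality := fun j j' g => by
        dsimp
        erw [Category.id_comp]
        exact (StructuredArrow.w g).symm }

noncomputable def isLimitConeK : IsLimit (coneK J F) := by
  have hk : IsLimit ((kappa J F).op) := (isColimitKappa J F).op
  have h2 := hk.whiskerEquivalence (costructuredArrowOpEquivalence (hSharp J) F).symm
  exact IsLimit.ofIsoLimit h2 (Cones.ext (Iso.refl _) (fun j => by
    dsimp
    simp [costructuredArrowOpEquivalence, StructuredArrow.toCostructuredArrow']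
    exact (Category.id_comp _).symm))

end Part2

noncomputable def pointwise [PreservesLimitsOfSize.{u, u} P] :
    (Functor.RightExtension.mk P
      (𝟙 ((hSharp J).op ⋙ P))).IsPointwiseRightKanExtension := fun Y => by
  have h2 : IsLimit (P.mapCone (coneK J (unop Y))) :=
    isLimitOfPreserves P (isLimitConeK J (unop Y))
  refine IsLimit.ofIsoLimit h2 (Cones.ext (Iso.refl _) (fun j => ?_))
  dsimp
  simp
  exact ((Category.id_comp _).trans (Category.comp_id _)).symm

end StmtAux

/-- If `P : Shv(T)ᵒᵖ ⥤ Set` preserves all small limits, then `P ∘ h^♯` is a sheaf,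
and `P` (together with the identity 2-cell) is a right Kan extension of `P ∘ h^♯`
along `(h^♯)ᵒᵖ`, i.e. `Ran_{h^♯}(P ∘ h^♯) ≅ P`. -/
theorem stmt_1 {C : Type u} [SmallCategory C] (J : GrothendieckTopology C)
    (P : (Sheaf J (Type u))ᵒᵖ ⥤ Type u) [PreservesLimitsOfSize.{u, u} P] :
    Presheaf.IsSheaf J ((hSharp J).op ⋙ P) ∧
      P.IsRightKanExtension (𝟙 ((hSharp J).op ⋙ P)) := by
  exact ⟨StmtAux.isSheaf_A0 J P, (StmtAux.pointwise J P).isRightKanExtension⟩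
end

section
/- Let T be a Grothendieck site. If P : T^op → Set is a sheaf, then the right Kan extension Ran_{h^♯}(P) : Shv(T)^op → Set preserves all small limits, and the restriction Ran_{h^♯}(P) ∘ h^♯ is naturally isomorphic to P. -/
open CategoryTheory Limits Opposite

universe u

namespace Stmt2Aux

variable {C : Type u} [SmallCategory C] {J : GrothendieckTopology C}

/-- The "point" of a sheaf `F` at `c` seen as a map `h^♯ c ⟶ F`. -/
noncomputable def φ (F : Sheaf J (Type u)) (c : Cᵒᵖ) (s : F.val.obj c) :
    (hSharp J).obj c.unop ⟶ F :=
  ((sheafificationAdjunction J (Type u)).homEquiv (yoneda.obj c.unop) F).symm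
    (yonedaEquiv.symm s)

lemma φ_comp (F F' : Sheaf J (Type u)) (c : Cᵒᵖ) (s : F.val.obj c) (g : F ⟶ F') :
    φ F c s ≫ g = φ F' c (g.hom.app c s) := by
  have h := ((sheafificationAdjunction J (Type u)).homEquiv_naturality_right_symm
    (Y := F) (Y' := F') (yonedaEquiv.symm s) g).symm
  refine h.trans ?_
  unfold φ
  congr 1
  exact yonedaEquiv_symm_naturality_right _ _ _

lemma φ_map (F : Sheaf J (Type u)) {c c' : Cᵒᵖ} (f : c ⟶ c') (s : F.val.obj c) :
    φ F c' (F.val.map f s) = (hSharp J).map f.unop ≫ φ F c s := by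
  have h := ((sheafificationAdjunction J (Type u)).homEquiv_naturality_left_symm
    (Y := F) (yoneda.map f.unop) (yonedaEquiv.symm s))
  refine Eq.trans ?_ h
  unfold φ
  congr 1
  exact (yonedaEquiv_symm_naturality_left _ _ _).symm

/-- The universal point of `h^♯ c` at `c`. -/
noncomputable def u (c : Cᵒᵖ) : ((hSharp J (C := C)).obj c.unop).val.obj c :=
  yonedaEquiv ((sheafificationAdjunction J (Type u)).unit.app (yoneda.obj c.unop))

lemma φ_u (c : Cᵒᵖ) : φ ((hSharp J (C := C)).obj c.unop) c (u c) = 𝟙 _ := by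
  unfold φ u
  refine ((sheafificationAdjunction J (Type u)).homEquiv _ _).injective ?_
  refine (Equiv.apply_symm_apply _ _).trans ?_
  refine (Equiv.symm_apply_apply _ _).trans ?_
  exact ((sheafificationAdjunction J (Type u)).homEquiv_id (yoneda.obj c.unop)).symm

variable (P : Cᵒᵖ ⥤ Type u) (hP : Presheaf.IsSheaf J P)

/-- The restriction of `Hom(-, (P, hP))` along `h^♯` is isomorphic to `P`. -/
noncomputable def e :
    (hSharp J).op ⋙ yoneda.obj (⟨P, hP⟩ : Sheaf J (Type u)) ≅ P :=
  NatIso.ofComponents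
    (fun c => (((sheafificationAdjunction J (Type u)).homEquiv (yoneda.obj c.unop)
        ⟨P, hP⟩).trans yonedaEquiv).toIso)
    (by
      intro c c' f
      ext g
      dsimp [hSharp]
      have h := (sheafificationAdjunction J (Type u)).homEquiv_naturality_left
        (Y := (⟨P, hP⟩ : Sheaf J (Type u))) (yoneda.map f.unop) g
      refine (congrArg yonedaEquiv h).trans ?_
      exact (yonedaEquiv_naturality _ _).symm)

lemma e_app (F : Sheaf J (Type u)) (c : Cᵒᵖ) (s : F.val.obj c)
    (f : F ⟶ (⟨P, hP⟩ : Sheaf J (Type u))) :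
    (e P hP).hom.app c (φ F c s ≫ f) = f.hom.app c s := by
  have h := (sheafificationAdjunction J (Type u)).homEquiv_naturality_right
    (φ F c s) f
  dsimp [e]
  refine (congrArg yonedaEquiv h).trans ?_
  refine (yonedaEquiv_comp _ _).trans ?_
  refine congrArg (fun x => f.hom.app c x) ?_
  refine (congrArg yonedaEquiv (Equiv.apply_symm_apply
    ((sheafificationAdjunction J (Type u)).homEquiv (yoneda.obj c.unop) F)
    (yonedaEquiv.symm s))).trans ?_
  exact Equiv.apply_symm_apply yonedaEquiv s

lemma e_app' (c : Cᵒᵖ) (f : (hSharp J).obj c.unop ⟶ (⟨P, hP⟩ : Sheaf J (Type u))) :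
    (e P hP).hom.app c f = f.hom.app c (u c) := by
  conv_lhs => rw [show f = φ ((hSharp J).obj c.unop) c (u c) ≫ f by rw [φ_u]; simp]
  rw [e_app]

end Stmt2Aux

/-- If `P : Tᵒᵖ ⥤ Set` is a sheaf, then its right Kan extension `Ran_{h^♯}(P)`
along `h^♯` exists, preserves all small limits, and its restriction along `h^♯` is
naturally isomorphic to `P` (via the counit `α` being an isomorphism). -/
theorem stmt_2 {C : Type u} [SmallCategory C] (J : GrothendieckTopology C)
    (P : Cᵒᵖ ⥤ Type u) (hP : Presheaf.IsSheaf J P) :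
    ∃ (R : (Sheaf J (Type u))ᵒᵖ ⥤ Type u) (α : (hSharp J).op ⋙ R ⟶ P),
      R.IsRightKanExtension α ∧ PreservesLimitsOfSize.{u, u} R ∧ IsIso α := by
  classical
  set S : Sheaf J (Type u) := ⟨P, hP⟩ with hS
  refine ⟨yoneda.obj S, (Stmt2Aux.e P hP).hom, ?_, ?_, ?_⟩
  · constructor
    constructor
    refine IsTerminal.ofUniqueHom (fun G => ?_) (fun G m => ?_)
    · -- construct the lift
      refine CostructuredArrow.homMk ?_ ?_
      · exact
        { app := fun Fop => TypeCat.ofHom fun x =>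
            ⟨{ app := fun c => TypeCat.ofHom fun s => G.hom.app c (G.left.map (Stmt2Aux.φ Fop.unop c s).op x)
               naturality := by
                 intro c c' f
                 ext s
                 dsimp
                 rw [Stmt2Aux.φ_map]
                 have := ConcreteCategory.congr_hom (G.hom.naturality f) (G.left.map (Stmt2Aux.φ Fop.unop c s).op x)
                 dsimp at this
                 rw [op_comp, Functor.map_comp_apply]
                 exact this }⟩
          naturality := by
            intro Fop Fop' h
            ext x
            dsimp
            apply Sheaf.hom_ext
            ext c s
            dsimp
            change G.hom.app c _ = G.hom.app c _
            rw [← Functor.map_comp_apply,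
              show h ≫ (Stmt2Aux.φ Fop'.unop c s).op
                = (Stmt2Aux.φ Fop'.unop c s ≫ h.unop).op from rfl,
              Stmt2Aux.φ_comp]
            rfl }
      · -- the lift is compatible
        ext c x
        dsimp
        change (Stmt2Aux.e P hP).hom.app c _ = _
        refine (Stmt2Aux.e_app' P hP c _).trans ?_
        dsimp
        change G.hom.app c (G.left.map (Stmt2Aux.φ _ c (Stmt2Aux.u c)).op x) = _
        rw [Stmt2Aux.φ_u]
        simp
    · -- uniqueness
      apply CostructuredArrow.hom_ext
      dsimp
      ext Fop x
      have hw := m.w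
      dsimp at hw
      apply Sheaf.hom_ext
      ext c s
      dsimp
      have hnat := ConcreteCategory.congr_hom (m.left.naturality (Stmt2Aux.φ Fop.unop c s).op) x
      dsimp at hnat
      have := congrArg ((Stmt2Aux.e P hP).hom.app c) hnat
      change _ = (Stmt2Aux.e P hP).hom.app c (Stmt2Aux.φ Fop.unop c s ≫ (m.left.app Fop) x) at this
      replace this := this.trans (Stmt2Aux.e_app P hP _ c s _)
      refine this.symm.trans ?_
      have hw' := ConcreteCategory.congr_hom (NatTrans.congr_app hw c)
        (G.left.map (Stmt2Aux.φ Fop.unop c s).op x)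
      dsimp at hw'
      exact hw'
  · exact inferInstance
  · exact inferInstance
end

section
/- Every locally weakly contractible 1-topos is replete. In particular, if a 1-topos X has a generating collection of weakly contractible objects, then for any ℕ-indexed inverse system (F_n) in X in which each transition map F_{n+1} → F_n is an epimorphism, the projection lim F → F_n is an epimorphism for every n. -/
open CategoryTheory Limits Opposite

universe u

variable {C : Type u} [SmallCategory C]

/-- A category (e.g. a 1-topos) is *replete* if for every `ℕ`-indexed inverse system
in which all transition maps are epimorphisms, the projections from the inverse limit
are epimorphisms. -/
def IsReplete (D : Type*) [CategoryTheory.Category D]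
    [HasLimitsOfShape ℕᵒᵖ D] : Prop :=
  ∀ F : ℕᵒᵖ ⥤ D,
    (∀ n : ℕ, Epi (F.map (homOfLE (Nat.le_succ n)).op)) →
    ∀ n : ℕ, Epi (limit.π F (op n))

/-- An object `Y` of a 1-topos is *weakly contractible* if every epimorphism onto `Y`
splits. -/
def WeaklyContractible {D : Type*} [CategoryTheory.Category D] (Y : D) : Prop :=
  ∀ (G : D) (φ : G ⟶ Y), Epi φ → ∃ s : Y ⟶ G, s ≫ φ = 𝟙 Y

instance instHasColimitsSheafTypeStmt16 (J : GrothendieckTopology C) :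
    HasColimitsOfSize.{u, u} (Sheaf J (Type u)) :=
  Sheaf.instHasColimitsOfSize

section Aux

variable {J : GrothendieckTopology C}

/-- In a sheaf topos over a small site, epimorphisms are stable under pullback. -/
lemma epi_pb {A B Y : Sheaf J (Type u)} (f : Y ⟶ B) (g : A ⟶ B) [Epi g] :
    Epi (pullback.fst f g) := by
  rw [← Sheaf.isLocallySurjective_iff_epi'] at *
  constructor
  intro U y
  have hg : Presheaf.IsLocallySurjective J g.hom := ‹Sheaf.IsLocallySurjective g›
  refine J.superset_covering ?_
    (Presheaf.imageSieve_mem J g.hom (f.hom.app (op U) y))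
  rintro V h ⟨a, ha⟩
  let G : Sheaf J (Type u) ⥤ Type u :=
    sheafToPresheaf J (Type u) ⋙ (evaluation Cᵒᵖ (Type u)).obj (op V)
  let e : G.obj (pullback f g) ≅ pullback (G.map f) (G.map g) :=
    PreservesPullback.iso G f g
  have hfg : (G.map f) (Y.obj.map h.op y) = (G.map g) a := by
    show f.hom.app (op V) (Y.obj.map h.op y) = g.hom.app (op V) a
    exact (FunctorToTypes.naturality f.hom h.op y).trans ha.symm
  let x0 : (Types.pullbackCone (G.map f) (G.map g)).pt := ⟨⟨Y.obj.map h.op y, a⟩, hfg⟩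
  refine ⟨e.inv ((Types.pullbackIsoPullback (G.map f) (G.map g)).inv x0), ?_⟩
  have h1 : pullback.fst (G.map f) (G.map g)
      ((Types.pullbackIsoPullback (G.map f) (G.map g)).inv x0) = Y.obj.map h.op y :=
    Types.pullbackIsoPullback_inv_fst_apply (G.map f) (G.map g) x0
  have h2 : ∀ z, G.map (pullback.fst f g) (e.inv z) = pullback.fst (G.map f) (G.map g) z :=
    fun z => ConcreteCategory.congr_hom (PreservesPullback.iso_inv_fst G f g) z
  exact (h2 _).trans h1

/-- A map from a weakly contractible sheaf lifts across any epimorphism. -/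
lemma wc_lift {A B Y : Sheaf J (Type u)} (hY : WeaklyContractible Y)
    (f : Y ⟶ B) (g : A ⟶ B) (hg : Epi g) : ∃ l : Y ⟶ A, l ≫ g = f := by
  have : Epi g := hg
  have := epi_pb f g
  obtain ⟨s, hs⟩ := hY _ (pullback.fst f g) this
  exact ⟨s ≫ pullback.snd f g, by
    rw [Category.assoc, ← pullback.condition, ← Category.assoc, hs, Category.id_comp]⟩

lemma Fcomp (F : ℕᵒᵖ ⥤ Sheaf J (Type u)) {a b c : ℕ} (hab : a ≤ b) (hbc : b ≤ c) :
    F.map (homOfLE hbc).op ≫ F.map (homOfLE hab).op = F.map (homOfLE (hab.trans hbc)).op := by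
  rw [← F.map_comp]; congr 1

lemma Fid (F : ℕᵒᵖ ⥤ Sheaf J (Type u)) {a : ℕ} (h : a ≤ a) :
    F.map (homOfLE h).op = 𝟙 _ := by
  have : (homOfLE h).op = 𝟙 (op a) := rfl
  rw [this, F.map_id]

/-- Successive lifts of `f` up the tower. -/
noncomputable def dseq (F : ℕᵒᵖ ⥤ Sheaf J (Type u))
    (hF : ∀ n : ℕ, Epi (F.map (homOfLE (Nat.le_succ n)).op))
    {W : Sheaf J (Type u)} (hW : WeaklyContractible W) {n : ℕ} (f : W ⟶ F.obj (op n)) :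
    ∀ k : ℕ, W ⟶ F.obj (op (n + k))
  | 0 => f ≫ F.map (homOfLE (by omega : n ≤ n + 0)).op
  | (k+1) => (wc_lift hW (dseq F hF hW f k) (F.map (homOfLE (Nat.le_succ (n+k))).op)
      (hF (n+k))).choose

lemma dseq_succ (F : ℕᵒᵖ ⥤ Sheaf J (Type u))
    (hF : ∀ n : ℕ, Epi (F.map (homOfLE (Nat.le_succ n)).op))
    {W : Sheaf J (Type u)} (hW : WeaklyContractible W) {n : ℕ} (f : W ⟶ F.obj (op n))
    (k : ℕ) :
    dseq F hF hW f (k+1) ≫ F.map (homOfLE (Nat.le_succ (n+k))).op = dseq F hF hW f k :=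
  (wc_lift hW (dseq F hF hW f k) _ (hF (n+k))).choose_spec

lemma dseq_add (F : ℕᵒᵖ ⥤ Sheaf J (Type u))
    (hF : ∀ n : ℕ, Epi (F.map (homOfLE (Nat.le_succ n)).op))
    {W : Sheaf J (Type u)} (hW : WeaklyContractible W) {n : ℕ} (f : W ⟶ F.obj (op n))
    (k j : ℕ) :
    dseq F hF hW f (k+j) ≫ F.map (homOfLE (by omega : n + k ≤ n + (k+j))).op
      = dseq F hF hW f k := by
  induction j with
  | zero => rw [Fid]; exact Category.comp_id _
  | succ j ih =>
      have h1 : n + k ≤ n + (k + j) := by omega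
      have h2 : n + (k + j) ≤ n + (k + (j + 1)) := by omega
      have step : dseq F hF hW f (k + (j+1)) ≫ F.map (homOfLE h2).op
          = dseq F hF hW f (k + j) := by
        have e : k + (j + 1) = (k + j) + 1 := by omega
        have := dseq_succ F hF hW f (k + j)
        exact this
      calc dseq F hF hW f (k+(j+1)) ≫ F.map (homOfLE (by omega : n + k ≤ n + (k+(j+1)))).op
          = dseq F hF hW f (k+(j+1)) ≫ F.map (homOfLE h2).op ≫ F.map (homOfLE h1).op := by
            rw [Fcomp]
        _ = dseq F hF hW f (k+j) ≫ F.map (homOfLE h1).op := by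
            rw [← Category.assoc, step]
        _ = dseq F hF hW f k := ih

lemma dseq_le (F : ℕᵒᵖ ⥤ Sheaf J (Type u))
    (hF : ∀ n : ℕ, Epi (F.map (homOfLE (Nat.le_succ n)).op))
    {W : Sheaf J (Type u)} (hW : WeaklyContractible W) {n : ℕ} (f : W ⟶ F.obj (op n))
    {k k' : ℕ} (hkk : k ≤ k') (h : n + k ≤ n + k') :
    dseq F hF hW f k' ≫ F.map (homOfLE h).op = dseq F hF hW f k := by
  obtain ⟨j, rfl⟩ := Nat.exists_eq_add_of_le hkk
  exact dseq_add F hF hW f k j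

lemma dseq_congr (F : ℕᵒᵖ ⥤ Sheaf J (Type u))
    (hF : ∀ n : ℕ, Epi (F.map (homOfLE (Nat.le_succ n)).op))
    {W : Sheaf J (Type u)} (hW : WeaklyContractible W) {n : ℕ} (f : W ⟶ F.obj (op n))
    {k k' : ℕ} (e : k = k') {a : ℕ} (h : a ≤ n + k) (h' : a ≤ n + k') :
    dseq F hF hW f k ≫ F.map (homOfLE h).op = dseq F hF hW f k' ≫ F.map (homOfLE h').op := by
  subst e; rfl

/-- The components of the cone over the tower induced by `f`. -/
noncomputable def cseq (F : ℕᵒᵖ ⥤ Sheaf J (Type u))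
    (hF : ∀ n : ℕ, Epi (F.map (homOfLE (Nat.le_succ n)).op))
    {W : Sheaf J (Type u)} (hW : WeaklyContractible W) {n : ℕ} (f : W ⟶ F.obj (op n))
    (m : ℕ) : W ⟶ F.obj (op m) :=
  dseq F hF hW f (m - n) ≫ F.map (homOfLE (by omega : m ≤ n + (m - n))).op

lemma cseq_nat (F : ℕᵒᵖ ⥤ Sheaf J (Type u))
    (hF : ∀ n : ℕ, Epi (F.map (homOfLE (Nat.le_succ n)).op))
    {W : Sheaf J (Type u)} (hW : WeaklyContractible W) {n : ℕ} (f : W ⟶ F.obj (op n))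
    {m m' : ℕ} (h : m ≤ m') :
    cseq F hF hW f m' ≫ F.map (homOfLE h).op = cseq F hF hW f m := by
  unfold cseq
  rw [Category.assoc, Fcomp F h (by omega : m' ≤ n + (m' - n))]
  rw [← Fcomp F (by omega : m ≤ n + (m - n)) (by omega : n + (m-n) ≤ n + (m' - n)),
    ← Category.assoc, dseq_le F hF hW f (by omega : m - n ≤ m' - n)]

/-- The cone over the tower induced by a map from a weakly contractible sheaf. -/
noncomputable def towerCone (F : ℕᵒᵖ ⥤ Sheaf J (Type u))
    (hF : ∀ n : ℕ, Epi (F.map (homOfLE (Nat.le_succ n)).op))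
    {W : Sheaf J (Type u)} (hW : WeaklyContractible W) {n : ℕ} (f : W ⟶ F.obj (op n)) :
    Cone F where
  pt := W
  π := { app := fun m => cseq F hF hW f m.unop
         naturality := by
           rintro ⟨m⟩ ⟨m'⟩ g
           have h : m' ≤ m := leOfHom g.unop
           have hg : g = (homOfLE h).op := rfl
           rw [hg]
           simpa using (cseq_nat F hF hW f h).symm }

lemma towerCone_fac (F : ℕᵒᵖ ⥤ Sheaf J (Type u))
    (hF : ∀ n : ℕ, Epi (F.map (homOfLE (Nat.le_succ n)).op))
    {W : Sheaf J (Type u)} (hW : WeaklyContractible W) {n : ℕ} (f : W ⟶ F.obj (op n)) :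
    limit.lift F (towerCone F hF hW f) ≫ limit.π F (op n) = f := by
  rw [limit.lift_π]
  show cseq F hF hW f n = f
  unfold cseq
  rw [dseq_congr F hF hW f (Nat.sub_self n) (by omega : n ≤ n + (n - n))
    (by omega : n ≤ n + 0)]
  show (f ≫ F.map _) ≫ F.map _ = f
  rw [Category.assoc, Fcomp, Fid, Category.comp_id]

end Aux

/-- Every locally weakly contractible 1-topos is replete: if every object of the topos
`Shv(T)` admits an epimorphism from a coproduct of weakly contractible objects, then
for every `ℕ`-indexed inverse system with epimorphic transition maps the projections
from the limit are epimorphisms. -/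
theorem stmt_16 (J : GrothendieckTopology C)
    (hlwc : ∀ F : Sheaf J (Type u),
      ∃ (ι : Type u) (Y : ι → Sheaf J (Type u)) (φ : (∐ Y) ⟶ F),
        (∀ i : ι, WeaklyContractible (Y i)) ∧ Epi φ) :
    IsReplete (Sheaf J (Type u)) := by
  intro F hF n
  obtain ⟨ι, Y, φ, hY, hφ⟩ := hlwc (F.obj (op n))
  have fac : Sigma.desc
      (fun i => limit.lift F (towerCone F hF (hY i) (Sigma.ι Y i ≫ φ))) ≫ limit.π F (op n)
      = φ := by
    apply colimit.hom_ext
    rintro ⟨i⟩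
    rw [← Category.assoc, colimit.ι_desc]
    exact towerCone_fac F hF (hY i) (Sigma.ι Y i ≫ φ)
  haveI := hφ
  exact epi_of_epi_fac (h := φ) fac
end

section
/- Let X be a replete 1-topos and let (G_n)_{n∈ℕ} be an inverse system of abelian group objects of X in which each transition map G_{n+1} → G_n is an epimorphism. Then lim^1_n G_n = 0, i.e., the map ∏ G_n → ∏ G_n, (x_n) ↦ (x_n − f_{n+1}(x_{n+1})), is an epimorphism of abelian group objects. -/
open CategoryTheory Limits Opposite

universe u

variable {C : Type u} [SmallCategory C]

namespace Stmt17Aux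

variable (J : GrothendieckTopology C)
variable (G : ℕᵒᵖ ⥤ Sheaf J AddCommGrpCat.{u})

noncomputable abbrev A : Sheaf J AddCommGrpCat.{u} := ∏ᶜ (fun n : ℕ => G.obj (op n))

noncomputable def d : A J G ⟶ A J G :=
  Pi.lift (fun n : ℕ =>
    Pi.π (fun m : ℕ => G.obj (op m)) n -
      Pi.π (fun m : ℕ => G.obj (op m)) (n + 1) ≫ G.map (homOfLE (Nat.le_succ n)).op)

noncomputable def t (n : ℕ) : (G.obj (op (n + 1)) ⊞ A J G) ⟶ (G.obj (op n) ⊞ A J G) :=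
  biprod.lift
    (biprod.snd ≫ Pi.π (fun m : ℕ => G.obj (op m)) n +
      biprod.fst ≫ G.map (homOfLE (Nat.le_succ n)).op)
    biprod.snd

noncomputable def e (n : ℕ) : (G.obj (op n) ⊞ A J G) ⟶ (G.obj (op n) ⊞ A J G) :=
  biprod.lift (biprod.fst + biprod.snd ≫ Pi.π (fun m : ℕ => G.obj (op m)) n) biprod.snd

noncomputable def e' (n : ℕ) : (G.obj (op n) ⊞ A J G) ⟶ (G.obj (op n) ⊞ A J G) :=
  biprod.lift (biprod.fst - biprod.snd ≫ Pi.π (fun m : ℕ => G.obj (op m)) n) biprod.snd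

instance (n : ℕ) : IsIso (e J G n) := by
  refine ⟨e' J G n, ?_, ?_⟩ <;>
    · apply biprod.hom_ext <;>
        simp [e, e', Preadditive.add_comp, Preadditive.sub_comp]

lemma t_fac (n : ℕ) :
    t J G n = biprod.map (G.map (homOfLE (Nat.le_succ n)).op) (𝟙 (A J G)) ≫ e J G n := by
  apply biprod.hom_ext <;> simp [t, e, Preadditive.comp_add, add_comm]

instance (n : ℕ) [Epi (G.map (homOfLE (Nat.le_succ n)).op)] : Epi (t J G n) := by
  rw [t_fac]; exact epi_comp _ _

noncomputable def Tower : ℕᵒᵖ ⥤ Sheaf J AddCommGrpCat.{u} :=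
  Functor.ofOpSequence (X := fun n => G.obj (op n) ⊞ A J G) (t J G)

@[simp] lemma Tower_map_succ (n : ℕ) :
    (Tower J G).map (homOfLE (Nat.le_succ n)).op = t J G n :=
  Functor.ofOpSequence_map_homOfLE_succ _ n

noncomputable def cone : Cone (Tower J G) where
  pt := A J G
  π := NatTrans.ofOpSequence
    (fun n => biprod.lift (Pi.π (fun m : ℕ => G.obj (op m)) n) (d J G))
    (by
      intro n
      rw [Tower_map_succ]
      change 𝟙 (A J G) ≫ biprod.lift (Pi.π (fun m : ℕ => G.obj (op m)) n) (d J G) =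
        biprod.lift (Pi.π (fun m : ℕ => G.obj (op m)) (n + 1)) (d J G) ≫ t J G n
      apply biprod.hom_ext
      · simp [t, d, Preadditive.comp_add]
      · simp [t])

noncomputable def φ : A J G ⟶ limit (Tower J G) := limit.lift _ (cone J G)

noncomputable def ψ : limit (Tower J G) ⟶ A J G :=
  Pi.lift (fun n => limit.π (Tower J G) (op n) ≫ biprod.fst)

lemma π_snd_succ (n : ℕ) :
    limit.π (Tower J G) (op (n + 1)) ≫ biprod.snd =
      limit.π (Tower J G) (op n) ≫ biprod.snd := by
  rw [← limit.w (Tower J G) (homOfLE (Nat.le_succ n)).op, Tower_map_succ]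
  have ht : t J G n ≫ biprod.snd = biprod.snd := by simp [t]
  exact (congrArg (fun x => limit.π (Tower J G) (op (n + 1)) ≫ x) ht).symm.trans
    (Category.assoc _ _ _).symm

lemma π_snd_eq_zero (n : ℕ) :
    limit.π (Tower J G) (op n) ≫ biprod.snd =
      limit.π (Tower J G) (op 0) ≫ biprod.snd := by
  induction n with
  | zero => rfl
  | succ k ih => rw [π_snd_succ, ih]

lemma ψ_d : ψ J G ≫ d J G = limit.π (Tower J G) (op 0) ≫ biprod.snd := by
  apply Pi.hom_ext
  intro n
  have key := limit.w (Tower J G) (homOfLE (Nat.le_succ n)).op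
  rw [Tower_map_succ] at key
  have h1 : limit.π (Tower J G) (op (n + 1)) ≫ biprod.snd ≫ Pi.π (fun m : ℕ => G.obj (op m)) n +
      limit.π (Tower J G) (op (n + 1)) ≫ biprod.fst ≫ G.map (homOfLE (Nat.le_succ n)).op =
      limit.π (Tower J G) (op n) ≫ biprod.fst := by
    have h := key =≫ biprod.fst
    have ht : t J G n ≫ biprod.fst = biprod.snd ≫ Pi.π (fun m : ℕ => G.obj (op m)) n +
        biprod.fst ≫ G.map (homOfLE (Nat.le_succ n)).op := by simp [t]
    exact (Preadditive.comp_add _ _ _ _ _ _).symm.trans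
      ((congrArg (fun x => limit.π (Tower J G) (op (n + 1)) ≫ x) ht).symm.trans
        ((Category.assoc _ _ _).symm.trans h))
  have h2 : limit.π (Tower J G) (op (n+1)) ≫ biprod.snd ≫ Pi.π (fun m : ℕ => G.obj (op m)) n =
      (limit.π (Tower J G) (op 0) ≫ biprod.snd) ≫ Pi.π (fun m : ℕ => G.obj (op m)) n := by
    exact (Category.assoc _ _ _).symm.trans (π_snd_eq_zero J G (n+1) =≫ _)
  have lhs : (ψ J G ≫ d J G) ≫ Pi.π (fun m : ℕ => G.obj (op m)) n =
      limit.π (Tower J G) (op n) ≫ biprod.fst -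
        limit.π (Tower J G) (op (n + 1)) ≫ biprod.fst ≫ G.map (homOfLE (Nat.le_succ n)).op := by
    simp [ψ, d, Preadditive.comp_sub]
    exact Category.assoc _ _ _
  rw [lhs, ← h1, ← h2]
  abel

lemma φ_ψ : φ J G ≫ ψ J G = 𝟙 (A J G) := by
  apply Pi.hom_ext
  intro n
  simp [φ, ψ, cone]
  exact (Category.assoc _ _ _).symm.trans
    ((limit.lift_π (cone J G) (op n) =≫ biprod.fst).trans (biprod.lift_fst _ _))

lemma ψ_φ : ψ J G ≫ φ J G = 𝟙 (limit (Tower J G)) := by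
  apply limit.hom_ext
  rintro ⟨n⟩
  have : (φ J G) ≫ limit.π (Tower J G) (op n) =
      biprod.lift (Pi.π (fun m : ℕ => G.obj (op m)) n) (d J G) := by
    simp [φ, cone]
    rfl
  rw [Category.assoc, this, Category.id_comp]
  change ψ J G ≫ biprod.lift (Pi.π (fun m : ℕ => G.obj (op m)) n) (d J G) =
    limit.π (Tower J G) (op n)
  apply biprod.hom_ext
  · simp [ψ]
    rfl
  · simp [ψ_d, π_snd_eq_zero J G n]
    exact (π_snd_eq_zero J G n).symm

instance : IsIso (φ J G) := ⟨ψ J G, φ_ψ J G, ψ_φ J G⟩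

lemma d_fac : d J G = φ J G ≫ limit.π (Tower J G) (op 0) ≫ biprod.snd := by
  have : (φ J G) ≫ limit.π (Tower J G) (op 0) =
      biprod.lift (Pi.π (fun m : ℕ => G.obj (op m)) 0) (d J G) := by
    simp [φ, cone]
    rfl
  exact (((Category.assoc _ _ _).symm.trans (this =≫ biprod.snd)).trans (biprod.lift_snd _ _)).symm

noncomputable instance :
    PreservesLimitsOfShape ℕᵒᵖ (sheafCompose J (forget AddCommGrpCat.{u})) := by
  have : PreservesLimitsOfShape ℕᵒᵖ
      (sheafCompose J (forget AddCommGrpCat.{u}) ⋙ sheafToPresheaf J (Type u)) :=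
    inferInstanceAs (PreservesLimitsOfShape ℕᵒᵖ
      (sheafToPresheaf J AddCommGrpCat.{u} ⋙
        (Functor.whiskeringRight Cᵒᵖ AddCommGrpCat.{u} (Type u)).obj (forget AddCommGrpCat.{u})))
  exact preservesLimitsOfShape_of_reflects_of_preserves _ (sheafToPresheaf J (Type u))

lemma epi_of_epi_map {F₁ F₂ : Sheaf J AddCommGrpCat.{u}} (f : F₁ ⟶ F₂)
    (h : Epi ((sheafCompose J (forget AddCommGrpCat.{u})).map f)) : Epi f := by
  have h1 : Sheaf.IsLocallySurjective ((sheafCompose J (forget AddCommGrpCat.{u})).map f) :=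
    (Sheaf.isLocallySurjective_iff_epi _).2 h
  have h2 : Sheaf.IsLocallySurjective f :=
    (Presheaf.isLocallySurjective_iff_whisker_forget J f.hom).2 h1
  infer_instance

lemma epi_map_of_epi {F₁ F₂ : Sheaf J AddCommGrpCat.{u}} (f : F₁ ⟶ F₂) [Epi f] :
    Epi ((sheafCompose J (forget AddCommGrpCat.{u})).map f) := by
  have h1 : Sheaf.IsLocallySurjective f := (Sheaf.isLocallySurjective_iff_epi' (φ := f)).2 ‹_›
  infer_instance

end Stmt17Aux

open Stmt17Aux

/-- In a replete topos, `lim¹` of an inverse system of abelian group objects with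
epimorphic transition maps vanishes: the map `∏ G_n → ∏ G_n`,
`(x_n) ↦ (x_n − f_{n+1}(x_{n+1}))`, is an epimorphism of abelian group objects
(i.e. of sheaves of abelian groups). -/
theorem stmt_17 (J : GrothendieckTopology C) (hrep : IsReplete (Sheaf J (Type u)))
    (G : ℕᵒᵖ ⥤ Sheaf J AddCommGrpCat.{u})
    (htrans : ∀ n : ℕ, Epi (G.map (homOfLE (Nat.le_succ n)).op)) :
    Epi (Pi.lift (f := fun n : ℕ => G.obj (op n))
      (fun n : ℕ =>
        Pi.π (fun m : ℕ => G.obj (op m)) n -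
          Pi.π (fun m : ℕ => G.obj (op m)) (n + 1) ≫
            G.map (homOfLE (Nat.le_succ n)).op)) := by
  show Epi (d J G)
  have htow : ∀ n : ℕ,
      Epi ((Tower J G ⋙ sheafCompose J (forget AddCommGrpCat.{u})).map
        (homOfLE (Nat.le_succ n)).op) := by
    intro n
    have h1 : Epi ((Tower J G).map (homOfLE (Nat.le_succ n)).op) := by
      rw [Tower_map_succ]
      have := htrans n
      exact (inferInstance : Epi (t J G n))
    exact epi_map_of_epi J _
  have h0 : Epi (limit.π (Tower J G ⋙ sheafCompose J (forget AddCommGrpCat.{u})) (op 0)) :=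
    hrep _ htow 0
  have h1 : Epi ((sheafCompose J (forget AddCommGrpCat.{u})).map (limit.π (Tower J G) (op 0))) := by
    rw [← preservesLimitIso_hom_π (sheafCompose J (forget AddCommGrpCat.{u})) (Tower J G) (op 0)]
    exact epi_comp _ _
  have h2 : Epi (limit.π (Tower J G) (op 0)) := epi_of_epi_map J _ h1
  rw [d_fac]
  exact @epi_comp _ _ _ _ _ _ inferInstance _ (@epi_comp _ _ _ _ _ _ h2 _
    (inferInstanceAs (Epi (biprod.snd : G.obj (op 0) ⊞ A J G ⟶ A J G))))
end
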